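/- arXiv:1311.3887 — 5 statements merged into one kernel-verified Lean document; each statement's English description precedes it below -/
import Mathlib

section
/- Let A and B be positive semidefinite complex matrices of the same finite size, and let p, q > 1 be real numbers with 1/p + 1/q = 1. Then tr(AB) ≤ (tr(A^p))^(1/p) · (tr(B^q))^(1/q). (All traces appearing here are nonnegative real numbers.) -/
open scoped Kronecker ComplexOrder
open Matrix

/-- Real power of a matrix via the functional calculus on the eigenvalues,
with the convention `0 ^ t = 0` (powers taken on the support). -/
noncomputable def matRpow {n : Type*} [Fintype n] [DecidableEq n]
    (A : Matrix n n ℂ) (t : ℝ) : Matrix n n ℂ :=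
  if hA : A.IsHermitian then
    (hA.eigenvectorUnitary : Matrix n n ℂ) *
      Matrix.diagonal (fun i =>
        ((if hA.eigenvalues i = 0 then (0 : ℝ) else (hA.eigenvalues i) ^ t : ℝ) : ℂ)) *
      star (hA.eigenvectorUnitary : Matrix n n ℂ)
  else 0

/-- Matrix logarithm on the support. -/
noncomputable def matLog {n : Type*} [Fintype n] [DecidableEq n]
    (A : Matrix n n ℂ) : Matrix n n ℂ :=
  if hA : A.IsHermitian then
    (hA.eigenvectorUnitary : Matrix n n ℂ) *
      Matrix.diagonal (fun i => ((Real.log (hA.eigenvalues i) : ℝ) : ℂ)) *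
      star (hA.eigenvectorUnitary : Matrix n n ℂ)
  else 0

/-- Partial trace over the first tensor factor. -/
noncomputable def trFst {a b : Type*} [Fintype a] (M : Matrix (a × b) (a × b) ℂ) :
    Matrix b b ℂ :=
  Matrix.of fun j j' => ∑ i, M (i, j) (i, j')

/-- Partial trace over the second tensor factor. -/
noncomputable def trSnd {a b : Type*} [Fintype b] (M : Matrix (a × b) (a × b) ℂ) :
    Matrix a a ℂ :=
  Matrix.of fun i i' => ∑ j, M (i, j) (i', j)

/-- Partial trace over the third factor of a tripartite system. -/
noncomputable def trThird {a b c : Type*} [Fintype c]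
    (M : Matrix (a × b × c) (a × b × c) ℂ) : Matrix (a × b) (a × b) ℂ :=
  Matrix.of fun p p' => ∑ k, M (p.1, p.2, k) (p'.1, p'.2, k)

/-- Partial trace over the second factor of a tripartite system. -/
noncomputable def trSecond {a b c : Type*} [Fintype b]
    (M : Matrix (a × b × c) (a × b × c) ℂ) : Matrix (a × c) (a × c) ℂ :=
  Matrix.of fun p p' => ∑ j, M (p.1, j, p.2) (p'.1, j, p'.2)

/-- Partial trace over the first two factors of a tripartite system. -/
noncomputable def trFstSnd {a b c : Type*} [Fintype a] [Fintype b]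
    (M : Matrix (a × b × c) (a × b × c) ℂ) : Matrix c c ℂ :=
  Matrix.of fun k k' => ∑ i, ∑ j, M (i, j, k) (i, j, k')

/-- Partial trace over the first and third factors of a tripartite system. -/
noncomputable def trFstThird {a b c : Type*} [Fintype a] [Fintype c]
    (M : Matrix (a × b × c) (a × b × c) ℂ) : Matrix b b ℂ :=
  Matrix.of fun j j' => ∑ i, ∑ k, M (i, j, k) (i, j', k)

/-- Quantum Rényi relative entropy `D_α(ρ‖σ)`. -/
noncomputable def renyiDiv {n : Type*} [Fintype n] [DecidableEq n]
    (α : ℝ) (ρ σ : Matrix n n ℂ) : ℝ :=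
  (α - 1)⁻¹ * Real.log ((matRpow ρ α * matRpow σ (1 - α)).trace.re)

/-- Sandwiched quantum Rényi divergence `D̃_α(ρ‖σ)`. -/
noncomputable def sandwichedRenyiDiv {n : Type*} [Fintype n] [DecidableEq n]
    (α : ℝ) (ρ σ : Matrix n n ℂ) : ℝ :=
  (α - 1)⁻¹ * Real.log
    ((matRpow (matRpow σ ((1 - α) / (2 * α)) * ρ * matRpow σ ((1 - α) / (2 * α))) α).trace.re)

/-- Quantum relative entropy `D(ρ‖σ)`. -/
noncomputable def relEntropy {n : Type*} [Fintype n] [DecidableEq n]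
    (ρ σ : Matrix n n ℂ) : ℝ :=
  (ρ * (matLog ρ - matLog σ)).trace.re

lemma trace_conj_unitary {n : Type*} [Fintype n] [DecidableEq n]
    (u M : Matrix n n ℂ) (hu : star u * u = 1) :
    (u * M * star u).trace = M.trace := by
  rw [Matrix.trace_mul_cycle, hu, one_mul]

theorem holder_trace_inequality {n : Type*} [Fintype n] [DecidableEq n]
    (A B : Matrix n n ℂ) (hA : A.PosSemidef) (hB : B.PosSemidef)
    (p q : ℝ) (hp : 1 < p) (hq : 1 < q) (hpq : 1 / p + 1 / q = 1) :
    (A * B).trace.re ≤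
      ((matRpow A p).trace.re) ^ (1 / p) * ((matRpow B q).trace.re) ^ (1 / q) := by
  classical
  have hA' : A.IsHermitian := hA.1
  have hB' : B.IsHermitian := hB.1
  set U : Matrix n n ℂ := (hA'.eigenvectorUnitary : Matrix n n ℂ) with hUdef
  set V : Matrix n n ℂ := (hB'.eigenvectorUnitary : Matrix n n ℂ) with hVdef
  set a : n → ℝ := hA'.eigenvalues with hadef
  set b : n → ℝ := hB'.eigenvalues with hbdef
  have ha : ∀ i, 0 ≤ a i := fun i => hA.eigenvalues_nonneg i
  have hb : ∀ i, 0 ≤ b i := fun i => hB.eigenvalues_nonneg i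
  have hU1 : star U * U = 1 := mem_unitaryGroup_iff'.mp hA'.eigenvectorUnitary.2
  have hU2 : U * star U = 1 := mem_unitaryGroup_iff.mp hA'.eigenvectorUnitary.2
  have hV1 : star V * V = 1 := mem_unitaryGroup_iff'.mp hB'.eigenvectorUnitary.2
  have hV2 : V * star V = 1 := mem_unitaryGroup_iff.mp hB'.eigenvectorUnitary.2
  set W : Matrix n n ℂ := star U * V with hWdef
  have hW1 : star W * W = 1 := by
    rw [hWdef, Matrix.star_mul, star_star, mul_assoc, ← mul_assoc U, hU2, one_mul, hV1]
  have hW2 : W * star W = 1 := by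
    rw [hWdef, Matrix.star_mul, star_star, mul_assoc, ← mul_assoc V, hV2, one_mul, hU1]
  set w : n → n → ℝ := fun i j => Complex.normSq (W i j) with hwdef
  have hw : ∀ i j, 0 ≤ w i j := fun i j => Complex.normSq_nonneg _
  have row : ∀ i, ∑ j, w i j = 1 := by
    intro i
    have h := congrArg (fun M : Matrix n n ℂ => M i i) hW2
    simp only [Matrix.mul_apply, Matrix.star_apply, Matrix.one_apply_eq, Complex.star_def,
      Complex.mul_conj] at h
    exact_mod_cast h
  have col : ∀ j, ∑ i, w i j = 1 := by
    intro j
    have h := congrArg (fun M : Matrix n n ℂ => M j j) hW1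
    simp only [Matrix.mul_apply, Matrix.star_apply, Matrix.one_apply_eq, Complex.star_def,
      mul_comm, Complex.mul_conj] at h
    exact_mod_cast h
  set Da : Matrix n n ℂ := Matrix.diagonal (fun i => (a i : ℂ)) with hDadef
  set Db : Matrix n n ℂ := Matrix.diagonal (fun j => (b j : ℂ)) with hDbdef
  have hAspec : A = U * Da * star U := hA'.spectral_theorem
  have hBspec : B = V * Db * star V := hB'.spectral_theorem
  have hABeq : A * B = U * (Da * W * Db * star W) * star U := by
    conv_lhs => rw [hAspec, hBspec]
    rw [hWdef, Matrix.star_mul, star_star]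
    simp only [mul_assoc]
    rw [hU2]
    simp [mul_one]
  have htr2 : (Da * W * Db * star W).trace
      = ∑ i, ∑ j, ((a i : ℂ) * W i j * (b j : ℂ) * star (W i j)) := by
    simp only [hDadef, hDbdef, Matrix.trace, Matrix.diag_apply, Matrix.mul_apply,
      Matrix.diagonal_apply, Matrix.star_apply, ite_mul, mul_ite, zero_mul, mul_zero,
      Finset.sum_ite_eq, Finset.sum_ite_eq', Finset.mem_univ, if_true, Finset.sum_mul]
  have hre : (A * B).trace.re = ∑ i, ∑ j, a i * b j * w i j := by
    rw [hABeq, trace_conj_unitary _ _ hU1, htr2, Complex.re_sum]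
    refine Finset.sum_congr rfl fun i _ => ?_
    rw [Complex.re_sum]
    refine Finset.sum_congr rfl fun j _ => ?_
    have : (a i : ℂ) * W i j * (b j : ℂ) * star (W i j)
        = (a i : ℂ) * (b j : ℂ) * (W i j * (starRingEnd ℂ) (W i j)) := by
      simp [Complex.star_def]; ring
    rw [this, Complex.mul_conj]
    norm_cast
  have hp0 : (0:ℝ) < p := lt_trans one_pos hp
  have hq0 : (0:ℝ) < q := lt_trans one_pos hq
  have hrpA : (matRpow A p).trace.re = ∑ i, a i ^ p := by
    rw [matRpow, dif_pos hA', trace_conj_unitary _ _ hU1, Matrix.trace_diagonal,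
      Complex.re_sum]
    refine Finset.sum_congr rfl fun i _ => ?_
    rw [Complex.ofReal_re, show hA'.eigenvalues i = a i from rfl]
    by_cases h : a i = 0
    · simp [h, Real.zero_rpow hp0.ne']
    · simp [h]
  have hrpB : (matRpow B q).trace.re = ∑ i, b i ^ q := by
    rw [matRpow, dif_pos hB', trace_conj_unitary _ _ hV1, Matrix.trace_diagonal,
      Complex.re_sum]
    refine Finset.sum_congr rfl fun i _ => ?_
    rw [Complex.ofReal_re, show hB'.eigenvalues i = b i from rfl]
    by_cases h : b i = 0
    · simp [h, Real.zero_rpow hq0.ne']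
    · simp [h]
  have hpq' : p.HolderConjugate q := Real.holderConjugate_iff.mpr ⟨hp, by rw [← one_div, ← one_div]; exact hpq⟩
  have key := Real.inner_le_Lp_mul_Lq_of_nonneg (s := (Finset.univ : Finset (n × n)))
    (f := fun ij => a ij.1 * w ij.1 ij.2 ^ (1 / p))
    (g := fun ij => b ij.2 * w ij.1 ij.2 ^ (1 / q)) hpq'
    (fun ij _ => mul_nonneg (ha _) (Real.rpow_nonneg (hw _ _) _))
    (fun ij _ => mul_nonneg (hb _) (Real.rpow_nonneg (hw _ _) _))
  have hlhs : ∑ ij : n × n, (a ij.1 * w ij.1 ij.2 ^ (1 / p)) * (b ij.2 * w ij.1 ij.2 ^ (1 / q))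
      = ∑ i, ∑ j, a i * b j * w i j := by
    rw [Fintype.sum_prod_type]
    refine Finset.sum_congr rfl fun i _ => Finset.sum_congr rfl fun j _ => ?_
    have h1 : w i j ^ (1 / p) * w i j ^ (1 / q) = w i j := by
      rw [← Real.rpow_add' (hw i j) (by rw [hpq]; norm_num), hpq, Real.rpow_one]
    calc (a i * w i j ^ (1 / p)) * (b j * w i j ^ (1 / q))
        = a i * b j * (w i j ^ (1 / p) * w i j ^ (1 / q)) := by ring
      _ = a i * b j * w i j := by rw [h1]
  have hfp : ∑ ij : n × n, (a ij.1 * w ij.1 ij.2 ^ (1 / p)) ^ p = ∑ i, a i ^ p := by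
    rw [Fintype.sum_prod_type]
    refine Finset.sum_congr rfl fun i _ => ?_
    have : ∀ j, (a i * w i j ^ (1 / p)) ^ p = a i ^ p * w i j := by
      intro j
      rw [Real.mul_rpow (ha i) (Real.rpow_nonneg (hw i j) _),
        ← Real.rpow_mul (hw i j), one_div, inv_mul_cancel₀ hp0.ne', Real.rpow_one]
    simp_rw [this]
    rw [← Finset.mul_sum, row i, mul_one]
  have hgq : ∑ ij : n × n, (b ij.2 * w ij.1 ij.2 ^ (1 / q)) ^ q = ∑ j, b j ^ q := by
    rw [Fintype.sum_prod_type]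
    rw [Finset.sum_comm]
    refine Finset.sum_congr rfl fun j _ => ?_
    have : ∀ i, (b j * w i j ^ (1 / q)) ^ q = b j ^ q * w i j := by
      intro i
      rw [Real.mul_rpow (hb j) (Real.rpow_nonneg (hw i j) _),
        ← Real.rpow_mul (hw i j), one_div, inv_mul_cancel₀ hq0.ne', Real.rpow_one]
    simp_rw [this]
    rw [← Finset.mul_sum, col j, mul_one]
  rw [hre, hrpA, hrpB, ← hlhs, ← hfp, ← hgq]
  exact key
end

section
/- Let A and B be positive semidefinite complex matrices of the same finite size such that the kernel of B is contained in the kernel of A, and let p, q be real numbers with 0 < p < 1, q < 0 and 1/p + 1/q = 1. Then tr(AB) ≥ (tr(A^p))^(1/p) · (tr(B^q))^(1/q), where B^q is evaluated on the support of B (eigenvalue 0 is mapped to 0). -/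
open scoped Kronecker ComplexOrder
open Matrix

lemma scalar_rev_young {p q : ℝ} (hp0 : 0 < p) (hp1 : p < 1) (hq : q < 0)
    (hpq : 1 / p + 1 / q = 1) {x b : ℝ} (hx : 0 ≤ x) (hb : 0 < b) :
    x ^ p / p + b ^ q / q ≤ x * b := by
  have hq0 : q ≠ 0 := ne_of_lt hq
  have hp0' : p ≠ 0 := ne_of_gt hp0
  have hpq' : p + q = p * q := by field_simp at hpq; linarith
  have key : (x * b) ^ p * (b ^ q) ^ (1 - p) ≤ p * (x * b) + (1 - p) * b ^ q :=
    Real.geom_mean_le_arith_mean2_weighted hp0.le (by linarith)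
      (mul_nonneg hx hb.le) (Real.rpow_nonneg hb.le q) (by ring)
  have hred : (x * b) ^ p * (b ^ q) ^ (1 - p) = x ^ p := by
    rw [Real.mul_rpow hx hb.le, ← Real.rpow_mul hb.le, mul_assoc,
      ← Real.rpow_add hb]
    have : p + q * (1 - p) = 0 := by ring_nf; linarith [hpq']
    rw [this, Real.rpow_zero, mul_one]
  rw [hred] at key
  have hpq2 : p / q = p - 1 := by
    rw [div_eq_iff hq0]; ring_nf; linarith [hpq']
  have h2 : p * (x ^ p / p + b ^ q / q) ≤ p * (x * b) := by
    have e1 : p * (x ^ p / p) = x ^ p := by field_simp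
    have e2 : p * (b ^ q / q) = (p - 1) * b ^ q := by
      rw [← hpq2]; ring
    calc p * (x ^ p / p + b ^ q / q) = x ^ p + (p - 1) * b ^ q := by
          rw [mul_add, e1, e2]
      _ ≤ p * (x * b) := by linarith [key]
  exact le_of_mul_le_mul_left h2 hp0

lemma real_rev_holder {n : Type*} [Fintype n]
    (a b : n → ℝ) (w : n → n → ℝ) (ha : ∀ i, 0 ≤ a i) (hb : ∀ j, 0 ≤ b j)
    (hwnn : ∀ i j, 0 ≤ w i j) (hrow : ∀ i, ∑ j, w i j = 1) (hcol : ∀ j, ∑ i, w i j = 1)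
    (hker : ∀ j, b j = 0 → ∀ i, a i * w i j = 0)
    (p q : ℝ) (hp0 : 0 < p) (hp1 : p < 1) (hq : q < 0) (hpq : 1 / p + 1 / q = 1) :
    (∑ i, ∑ j, a i * b j * w i j) ≥
      (∑ i, a i ^ p) ^ (1 / p) *
        (∑ j, (if b j = 0 then (0 : ℝ) else b j ^ q)) ^ (1 / q) := by
  have hq0 : q ≠ 0 := ne_of_lt hq
  have hp0' : p ≠ 0 := ne_of_gt hp0
  set α := ∑ i, a i ^ p with hα
  set β := ∑ j, (if b j = 0 then (0 : ℝ) else b j ^ q) with hβ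
  set S := ∑ i, ∑ j, a i * b j * w i j with hS
  have hSnn : 0 ≤ S := by
    apply Finset.sum_nonneg; intro i _
    apply Finset.sum_nonneg; intro j _
    exact mul_nonneg (mul_nonneg (ha i) (hb j)) (hwnn i j)
  have hαnn : 0 ≤ α := Finset.sum_nonneg fun i _ => Real.rpow_nonneg (ha i) p
  have hβnn : 0 ≤ β := by
    apply Finset.sum_nonneg; intro j _
    split
    · exact le_refl 0
    · exact Real.rpow_nonneg (hb j) q
  rcases eq_or_lt_of_le hαnn with hα0 | hαpos
  · rw [← hα0, Real.zero_rpow (one_div_ne_zero hp0'), zero_mul]; exact hSnn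
  rcases eq_or_lt_of_le hβnn with hβ0 | hβpos
  · rw [← hβ0, Real.zero_rpow (one_div_ne_zero hq0), mul_zero]; exact hSnn
  set t := β ^ (1 / p) * (α ^ (1 / p))⁻¹ with ht
  have hαp : 0 < α ^ (1 / p) := Real.rpow_pos_of_pos hαpos _
  have hβp : 0 < β ^ (1 / p) := Real.rpow_pos_of_pos hβpos _
  have htpos : 0 < t := mul_pos hβp (inv_pos.2 hαp)
  have hpt : ∀ i j, ((t * a i) ^ p / p + (if b j = 0 then (0:ℝ) else b j ^ q) / q) * w i j
      ≤ (t * a i) * b j * w i j := by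
    intro i j
    by_cases hbj : b j = 0
    · rcases mul_eq_zero.mp (hker j hbj i) with hai | hwij
      · simp [hbj, hai, Real.zero_rpow hp0']
      · simp [hwij]
    · rw [if_neg hbj]
      have hbpos : 0 < b j := lt_of_le_of_ne (hb j) (Ne.symm hbj)
      exact mul_le_mul_of_nonneg_right
        (scalar_rev_young hp0 hp1 hq hpq (mul_nonneg htpos.le (ha i)) hbpos) (hwnn i j)
  have e1 : t ^ p * α / p = ∑ i, ∑ j, ((t * a i) ^ p / p) * w i j := by
    calc t ^ p * α / p = ∑ i, (t * a i) ^ p / p := by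
          rw [hα, Finset.mul_sum, Finset.sum_div]
          exact Finset.sum_congr rfl fun i _ => by
            rw [Real.mul_rpow htpos.le (ha i)]
      _ = ∑ i, ∑ j, ((t * a i) ^ p / p) * w i j := by
          refine Finset.sum_congr rfl fun i _ => ?_
          rw [← Finset.mul_sum, hrow i, mul_one]
  have e2 : β / q = ∑ i, ∑ j, ((if b j = 0 then (0:ℝ) else b j ^ q) / q) * w i j := by
    rw [Finset.sum_comm, hβ, Finset.sum_div]
    refine Finset.sum_congr rfl fun j _ => ?_
    rw [← Finset.mul_sum, hcol j, mul_one]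
  have e3 : t * S = ∑ i, ∑ j, (t * a i) * b j * w i j := by
    rw [hS, Finset.mul_sum]
    refine Finset.sum_congr rfl fun i _ => ?_
    rw [Finset.mul_sum]
    exact Finset.sum_congr rfl fun j _ => by ring
  have key : β ≤ t * S := by
    have hcomb : t ^ p * α / p + β / q ≤ t * S := by
      rw [e1, e2, e3, ← Finset.sum_add_distrib]
      refine Finset.sum_le_sum fun i _ => ?_
      rw [← Finset.sum_add_distrib]
      refine Finset.sum_le_sum fun j _ => ?_
      rw [← add_mul]
      exact hpt i j
    have hα0 : α ≠ 0 := ne_of_gt hαpos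
    have htp : t ^ p = β * α⁻¹ := by
      rw [ht, Real.mul_rpow hβp.le (inv_nonneg.2 hαp.le),
        ← Real.rpow_mul hβnn, one_div_mul_cancel hp0', Real.rpow_one,
        Real.inv_rpow hαp.le, ← Real.rpow_mul hαnn, one_div_mul_cancel hp0',
        Real.rpow_one]
    have e : t ^ p * α / p + β / q = β := by
      rw [htp, inv_mul_cancel_right₀ hα0]
      have : β / p + β / q = β * (1 / p + 1 / q) := by ring
      rw [this, hpq, mul_one]
    linarith [hcomb, e.symm.le]
  have hfinal : α ^ (1 / p) * β ^ (1 / q) * t = β := by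
    rw [ht, show α ^ (1/p) * β ^ (1/q) * (β ^ (1/p) * (α ^ (1/p))⁻¹)
        = (β ^ (1/q) * β ^ (1/p)) * (α ^ (1/p) * (α ^ (1/p))⁻¹) from by ring,
      mul_inv_cancel₀ (ne_of_gt hαp), mul_one, ← Real.rpow_add hβpos,
      show 1/q + 1/p = 1 from by linarith [hpq], Real.rpow_one]
  have h5 : α ^ (1 / p) * β ^ (1 / q) * t ≤ S * t := by
    rw [hfinal, mul_comm S t]; exact key
  exact (mul_le_mul_iff_of_pos_right htpos).mp h5

lemma trace_unitary_conj {n : Type*} [Fintype n] [DecidableEq n]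
    (U : Matrix.unitaryGroup n ℂ) (d : n → ℂ) :
    ((U : Matrix n n ℂ) * diagonal d * star (U : Matrix n n ℂ)).trace = ∑ i, d i := by
  rw [Matrix.trace_mul_cycle, mem_unitaryGroup_iff'.mp U.2, one_mul, Matrix.trace_diagonal]

lemma aux_diag_trace {n : Type*} [Fintype n] [DecidableEq n]
    (N : Matrix n n ℂ) (d e : n → ℂ) :
    (diagonal d * N * diagonal e * star N).trace
      = ∑ i, ∑ j, d i * e j * (N i j * star (N i j)) := by
  have h : ∀ i, (diagonal d * N * diagonal e * star N) i i
      = ∑ j, d i * e j * (N i j * star (N i j)) := by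
    intro i
    rw [Matrix.mul_apply]
    refine Finset.sum_congr rfl fun j _ => ?_
    rw [Matrix.mul_diagonal, Matrix.diagonal_mul, Matrix.star_apply]
    ring
  rw [Matrix.trace]
  exact Finset.sum_congr rfl fun i _ => h i

lemma trace_mul_eq_sum {n : Type*} [Fintype n] [DecidableEq n]
    (A B : Matrix n n ℂ) (cA : A.IsHermitian) (cB : B.IsHermitian) :
    (A * B).trace = ∑ i, ∑ j, ((cA.eigenvalues i : ℂ)) * ((cB.eigenvalues j : ℂ)) *
      (((star (cA.eigenvectorUnitary : Matrix n n ℂ) * (cB.eigenvectorUnitary : Matrix n n ℂ)) i j)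
        * star ((star (cA.eigenvectorUnitary : Matrix n n ℂ) * (cB.eigenvectorUnitary : Matrix n n ℂ)) i j)) := by
  set U : Matrix n n ℂ := (cA.eigenvectorUnitary : Matrix n n ℂ) with hU
  set V : Matrix n n ℂ := (cB.eigenvectorUnitary : Matrix n n ℂ) with hV
  set N : Matrix n n ℂ := star U * V with hN
  set da : n → ℂ := RCLike.ofReal ∘ cA.eigenvalues with hda
  set db : n → ℂ := RCLike.ofReal ∘ cB.eigenvalues with hdb
  have hsN : star N = star V * U := by rw [hN, Matrix.star_mul, star_star]
  have step : (A * B).trace = (diagonal da * N * diagonal db * star N).trace := by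
    conv_lhs => rw [cA.spectral_theorem, cB.spectral_theorem]
    rw [hsN]
    calc (U * diagonal da * star U * (V * diagonal db * star V)).trace
        = (U * (diagonal da * star U * (V * diagonal db * star V))).trace := by
          simp only [Matrix.mul_assoc]
      _ = ((diagonal da * star U * (V * diagonal db * star V)) * U).trace :=
          Matrix.trace_mul_comm _ _
      _ = (diagonal da * N * diagonal db * (star V * U)).trace := by
          rw [hN]; simp only [Matrix.mul_assoc]
  rw [step, aux_diag_trace]
  rfl

theorem reverse_holder_trace_inequality {n : Type*} [Fintype n] [DecidableEq n]
    (A B : Matrix n n ℂ) (hA : A.PosSemidef) (hB : B.PosSemidef)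
    (hker : LinearMap.ker B.mulVecLin ≤ LinearMap.ker A.mulVecLin)
    (p q : ℝ) (hp0 : 0 < p) (hp1 : p < 1) (hq : q < 0) (hpq : 1 / p + 1 / q = 1) :
    (A * B).trace.re ≥
      ((matRpow A p).trace.re) ^ (1 / p) * ((matRpow B q).trace.re) ^ (1 / q) := by
  classical
  have cA : A.IsHermitian := hA.isHermitian
  have cB : B.IsHermitian := hB.isHermitian
  set U : Matrix n n ℂ := (cA.eigenvectorUnitary : Matrix n n ℂ) with hU
  set V : Matrix n n ℂ := (cB.eigenvectorUnitary : Matrix n n ℂ) with hV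
  set N : Matrix n n ℂ := star U * V with hN
  set a : n → ℝ := cA.eigenvalues with ha
  set b : n → ℝ := cB.eigenvalues with hb
  set w : n → n → ℝ := fun i j => Complex.normSq (N i j) with hw
  have hUmem : U ∈ Matrix.unitaryGroup n ℂ := cA.eigenvectorUnitary.2
  have hVmem : V ∈ Matrix.unitaryGroup n ℂ := cB.eigenvectorUnitary.2
  have hNN : N * star N = 1 := by
    rw [hN, Matrix.star_mul, star_star]
    calc star U * V * (star V * U) = star U * (V * star V) * U := by
          simp only [Matrix.mul_assoc]
      _ = 1 := by
          rw [mem_unitaryGroup_iff.mp hVmem, Matrix.mul_one, mem_unitaryGroup_iff'.mp hUmem]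
  have hNN' : star N * N = 1 := by
    rw [hN, Matrix.star_mul, star_star]
    calc star V * U * (star U * V) = star V * (U * star U) * V := by
          simp only [Matrix.mul_assoc]
      _ = 1 := by
          rw [mem_unitaryGroup_iff.mp hUmem, Matrix.mul_one, mem_unitaryGroup_iff'.mp hVmem]
  -- row sums
  have hrow : ∀ i, ∑ j, w i j = 1 := by
    intro i
    have h : (N * star N) i i = 1 := by
      rw [hNN]; simp
    rw [Matrix.mul_apply] at h
    simp only [Matrix.star_apply, Complex.star_def, Complex.mul_conj] at h
    exact_mod_cast h
  have hcol : ∀ j, ∑ i, w i j = 1 := by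
    intro j
    have h : (star N * N) j j = 1 := by
      rw [hNN']; simp
    rw [Matrix.mul_apply] at h
    simp only [Matrix.star_apply, Complex.star_def, ← Complex.normSq_eq_conj_mul_self] at h
    exact_mod_cast h
  -- kernel fact
  have hkerw : ∀ j, b j = 0 → ∀ i, a i * w i j = 0 := by
    intro j hbj i
    set v : n → ℂ := fun k => V k j with hv
    have hBV : B * V = V * diagonal (RCLike.ofReal ∘ cB.eigenvalues) := by
      conv_lhs => rw [cB.spectral_theorem]
      calc V * diagonal (RCLike.ofReal ∘ cB.eigenvalues) * star V * V
          = V * diagonal (RCLike.ofReal ∘ cB.eigenvalues) * (star V * V) := by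
            simp only [Matrix.mul_assoc]
        _ = V * diagonal (RCLike.ofReal ∘ cB.eigenvalues) := by
            rw [mem_unitaryGroup_iff'.mp hVmem, Matrix.mul_one]
    have hBv : B *ᵥ v = 0 := by
      funext k
      have h1 : (B *ᵥ v) k = (B * V) k j := by
        simp [Matrix.mulVec, Matrix.mul_apply, dotProduct, hv]
      rw [h1, hBV, Matrix.mul_diagonal]
      simp [Function.comp, hb ▸ hbj]
    have hAv : A *ᵥ v = 0 := by
      have := hker (LinearMap.mem_ker.mpr (by rw [Matrix.mulVecLin_apply]; exact hBv))
      rwa [LinearMap.mem_ker, Matrix.mulVecLin_apply] at this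
    have hUA : star U * A = diagonal (RCLike.ofReal ∘ cA.eigenvalues) * star U := by
      conv_lhs => rw [cA.spectral_theorem]
      calc star U * (U * diagonal (RCLike.ofReal ∘ cA.eigenvalues) * star U)
          = (star U * U) * (diagonal (RCLike.ofReal ∘ cA.eigenvalues) * star U) := by
            simp only [Matrix.mul_assoc]
        _ = diagonal (RCLike.ofReal ∘ cA.eigenvalues) * star U := by
            rw [mem_unitaryGroup_iff'.mp hUmem, Matrix.one_mul]
    have hzero : (a i : ℂ) * N i j = 0 := by
      have hAVj : ∀ k, (A * V) k j = 0 := by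
        intro k
        have h2 : (A * V) k j = (A *ᵥ v) k := by
          simp [Matrix.mulVec, Matrix.mul_apply, dotProduct, hv]
        rw [h2, hAv]; rfl
      have h3 : (star U * (A * V)) i j = 0 := by
        rw [Matrix.mul_apply]
        exact Finset.sum_eq_zero fun k _ => by rw [hAVj k, mul_zero]
      have h4 : (star U * (A * V)) i j = (a i : ℂ) * N i j := by
        rw [← Matrix.mul_assoc, hUA, Matrix.mul_assoc, ← hN, Matrix.diagonal_mul]
        rfl
      rw [← h4, h3]
    rcases mul_eq_zero.mp hzero with h | h
    · have : a i = 0 := by exact_mod_cast h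
      rw [this, zero_mul]
    · have : w i j = 0 := by rw [hw]; simp [h]
      rw [this, mul_zero]
  -- traces
  have hABre : (A * B).trace.re = ∑ i, ∑ j, a i * b j * w i j := by
    rw [trace_mul_eq_sum A B cA cB, Complex.re_sum]
    refine Finset.sum_congr rfl fun i _ => ?_
    rw [Complex.re_sum]
    refine Finset.sum_congr rfl fun j _ => ?_
    rw [show ((star (cA.eigenvectorUnitary : Matrix n n ℂ) *
        (cB.eigenvectorUnitary : Matrix n n ℂ)) : Matrix n n ℂ) = N from rfl]
    rw [Complex.star_def, Complex.mul_conj, ← Complex.ofReal_mul, ← Complex.ofReal_mul,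
      Complex.ofReal_re]
  have hApre : (matRpow A p).trace.re = ∑ i, a i ^ p := by
    have h1 : matRpow A p = U * diagonal (fun i =>
        ((if cA.eigenvalues i = 0 then (0 : ℝ) else (cA.eigenvalues i) ^ p : ℝ) : ℂ)) * star U := by
      rw [matRpow, dif_pos cA]
    rw [h1, trace_unitary_conj cA.eigenvectorUnitary, Complex.re_sum]
    refine Finset.sum_congr rfl fun i _ => ?_
    rw [Complex.ofReal_re]
    by_cases hai : a i = 0
    · rw [if_pos (ha ▸ hai), hai, Real.zero_rpow (ne_of_gt hp0)]
    · rw [if_neg (ha ▸ hai)]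
  have hBqre : (matRpow B q).trace.re
      = ∑ j, (if b j = 0 then (0 : ℝ) else b j ^ q) := by
    have h1 : matRpow B q = V * diagonal (fun j =>
        ((if cB.eigenvalues j = 0 then (0 : ℝ) else (cB.eigenvalues j) ^ q : ℝ) : ℂ)) * star V := by
      rw [matRpow, dif_pos cB]
    rw [h1, trace_unitary_conj cB.eigenvectorUnitary, Complex.re_sum]
    exact Finset.sum_congr rfl fun j _ => Complex.ofReal_re _
  rw [hABre, hApre, hBqre]
  exact real_rev_holder a b w (fun i => hA.eigenvalues_nonneg i) (fun j => hB.eigenvalues_nonneg j)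
    (fun i j => Complex.normSq_nonneg _) hrow hcol hkerw p q hp0 hp1 hq hpq
end

section
/- Let ψ be a unit vector in ℂ^(A×B×C) and ρ_ABC = ψψ* the associated pure density matrix, with marginals ρ_AB = tr_C ρ_ABC and ρ_C = tr_{AB} ρ_ABC. Then for every real α, tr_A(ρ_AB^α) = tr_{AC}( (1_{AB} ⊗ ρ_C^{(α−1)/2}) · ρ_ABC · (1_{AB} ⊗ ρ_C^{(α−1)/2}) ), where both sides are matrices on the B-system and all matrix powers of positive semidefinite matrices are taken on the support (0^t = 0). -/
open scoped Kronecker ComplexOrder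
open Matrix Polynomial

/-- the eigenvalue function used by `matRpow`. -/
noncomputable def rf (t : ℝ) : ℝ → ℝ := fun x => if x = 0 then 0 else x ^ t

lemma matRpow_eq_cfc {n : Type*} [Fintype n] [DecidableEq n] {A : Matrix n n ℂ}
    (hA : A.IsHermitian) (t : ℝ) : matRpow A t = cfc (rf t) A := by
  rw [hA.cfc_eq, matRpow, dif_pos hA]
  rfl

lemma exists_interp (s : Set ℝ) (hs : s.Finite) (f : ℝ → ℝ) :
    ∃ q : ℝ[X], ∀ x ∈ s, q.eval x = f x := by
  refine ⟨Lagrange.interpolate hs.toFinset id f, fun x hx => ?_⟩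
  exact Lagrange.eval_interpolate_at_node f (Function.injective_id.injOn) (hs.mem_toFinset.2 hx)

lemma matRpow_eq_aeval {n : Type*} [Fintype n] [DecidableEq n] {A : Matrix n n ℂ}
    (hA : A.IsHermitian) (t : ℝ) (q : ℝ[X])
    (hq : ∀ x ∈ spectrum ℝ A, q.eval x = rf t x) :
    matRpow A t = Polynomial.aeval A q := by
  have hsa : IsSelfAdjoint A := hA
  rw [matRpow_eq_cfc hA t, ← cfc_polynomial q A hsa]
  exact cfc_congr fun x hx => (hq x hx).symm

lemma mul_pow_conjTranspose {m n : Type*} [Fintype m] [Fintype n] [DecidableEq m] [DecidableEq n]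
    (M : Matrix m n ℂ) (k : ℕ) : M * (Mᴴ * M) ^ k = (M * Mᴴ) ^ k * M := by
  induction k with
  | zero => simp
  | succ k ih =>
      rw [pow_succ, pow_succ, ← Matrix.mul_assoc, ih]
      simp only [Matrix.mul_assoc]

lemma mul_aeval_conjTranspose {m n : Type*} [Fintype m] [Fintype n] [DecidableEq m] [DecidableEq n]
    (M : Matrix m n ℂ) (q : ℝ[X]) :
    M * Polynomial.aeval (Mᴴ * M) q = Polynomial.aeval (M * Mᴴ) q * M := by
  induction q using Polynomial.induction_on' with
  | add p r hp hr => rw [map_add, map_add, Matrix.mul_add, Matrix.add_mul, hp, hr]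
  | monomial k c =>
      rw [Polynomial.aeval_monomial, Polynomial.aeval_monomial,
        Algebra.algebraMap_eq_smul_one, Algebra.algebraMap_eq_smul_one,
        smul_one_mul, smul_one_mul, Matrix.mul_smul, mul_pow_conjTranspose, Matrix.smul_mul]

lemma aeval_transpose {n : Type*} [Fintype n] [DecidableEq n]
    (A : Matrix n n ℂ) (q : ℝ[X]) :
    (Polynomial.aeval A q)ᵀ = Polynomial.aeval Aᵀ q := by
  induction q using Polynomial.induction_on' with
  | add p r hp hr => rw [map_add, map_add, transpose_add, hp, hr]
  | monomial k c =>
      rw [Polynomial.aeval_monomial, Polynomial.aeval_monomial, transpose_mul, transpose_pow]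
      rw [show (algebraMap ℝ (Matrix n n ℂ)) c = c • 1 from Algebra.algebraMap_eq_smul_one c]
      rw [transpose_smul, transpose_one, smul_one_mul, mul_smul_one]

lemma spectrum_nonneg_of_posSemidef {n : Type*} [Fintype n] [DecidableEq n]
    {A : Matrix n n ℂ} (hA : A.PosSemidef) {x : ℝ} (hx : x ∈ spectrum ℝ A) : 0 ≤ x := by
  rw [hA.isHermitian.spectrum_real_eq_range_eigenvalues] at hx
  obtain ⟨i, rfl⟩ := hx
  exact hA.eigenvalues_nonneg i

lemma key_identity {m n : Type*} [Fintype m] [Fintype n] [DecidableEq m] [DecidableEq n]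
    (M : Matrix m n ℂ) (α : ℝ) :
    matRpow (M * Mᴴ) α =
      M * matRpow (Mᴴ * M) ((α - 1) / 2) * matRpow (Mᴴ * M) ((α - 1) / 2) * Mᴴ := by
  set s : ℝ := (α - 1) / 2 with hs
  have hS := posSemidef_conjTranspose_mul_self M
  have hR := posSemidef_self_mul_conjTranspose M
  obtain ⟨q, hq⟩ := exists_interp (spectrum ℝ (Mᴴ * M) ∪ spectrum ℝ (M * Mᴴ))
    (Matrix.finite_real_spectrum.union Matrix.finite_real_spectrum) (rf s)
  have h1 : matRpow (Mᴴ * M) s = Polynomial.aeval (Mᴴ * M) q :=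
    matRpow_eq_aeval hS.1 s q fun x hx => hq x (Or.inl hx)
  have h2 : matRpow (M * Mᴴ) α = Polynomial.aeval (M * Mᴴ) (q * q * Polynomial.X) := by
    refine matRpow_eq_aeval hR.1 α _ fun x hx => ?_
    have hx0 : 0 ≤ x := spectrum_nonneg_of_posSemidef hR hx
    have hqx : q.eval x = rf s x := hq x (Or.inr hx)
    simp only [Polynomial.eval_mul, Polynomial.eval_X, hqx, rf]
    rcases eq_or_lt_of_le hx0 with h0 | hpos
    · simp [← h0]
    · rw [if_neg hpos.ne', if_neg hpos.ne', ← Real.rpow_add hpos,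
        show α = s + s + 1 by rw [hs]; ring, Real.rpow_add hpos (s+s) 1,
        Real.rpow_add hpos s s, Real.rpow_one]
  rw [h1, h2, _root_.map_mul, _root_.map_mul, Polynomial.aeval_X, mul_aeval_conjTranspose,
    Matrix.mul_assoc (Polynomial.aeval (M * Mᴴ) q) M, mul_aeval_conjTranspose]
  simp only [Matrix.mul_assoc]

lemma matRpow_transpose {n : Type*} [Fintype n] [DecidableEq n] {A : Matrix n n ℂ}
    (hA : A.IsHermitian) (t : ℝ) : matRpow Aᵀ t = (matRpow A t)ᵀ := by
  obtain ⟨q, hq⟩ := exists_interp (spectrum ℝ A ∪ spectrum ℝ Aᵀ)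
    (Matrix.finite_real_spectrum.union Matrix.finite_real_spectrum) (rf t)
  rw [matRpow_eq_aeval hA.transpose t q fun x hx => hq x (Or.inr hx),
    matRpow_eq_aeval hA t q fun x hx => hq x (Or.inl hx), aeval_transpose]

lemma matRpow_isHermitian {n : Type*} [Fintype n] [DecidableEq n] {A : Matrix n n ℂ}
    (hA : A.IsHermitian) (t : ℝ) : (matRpow A t).IsHermitian := by
  rw [matRpow_eq_cfc hA]
  exact cfc_predicate _ _

theorem marginals_unitarily_equivalent {A B C : Type*}
    [Fintype A] [DecidableEq A] [Fintype B] [DecidableEq B] [Fintype C] [DecidableEq C]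
    (ψ : A × B × C → ℂ) (hψ : star ψ ⬝ᵥ ψ = 1) (α : ℝ) :
    trFst (matRpow (trThird (vecMulVec ψ (star ψ))) α) =
      trFstThird
        (((1 : Matrix A A ℂ) ⊗ₖ ((1 : Matrix B B ℂ) ⊗ₖ
            matRpow (trFstSnd (vecMulVec ψ (star ψ))) ((α - 1) / 2))) *
          vecMulVec ψ (star ψ) *
          ((1 : Matrix A A ℂ) ⊗ₖ ((1 : Matrix B B ℂ) ⊗ₖ
            matRpow (trFstSnd (vecMulVec ψ (star ψ))) ((α - 1) / 2)))) := by
  classical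
  set ρ : Matrix (A × B × C) (A × B × C) ℂ := vecMulVec ψ (star ψ) with hρ
  set M : Matrix (A × B) C ℂ := Matrix.of (fun p k => ψ (p.1, p.2, k)) with hM
  have h3 : trThird ρ = M * Mᴴ := by
    ext p p'
    simp [trThird, mul_apply, vecMulVec_apply, conjTranspose_apply, hM, hρ]
  have hfs : trFstSnd ρ = (Mᴴ * M)ᵀ := by
    ext k k'
    simp only [trFstSnd, of_apply, transpose_apply, mul_apply, conjTranspose_apply, of_apply,
      vecMulVec_apply, hM, hρ, Fintype.sum_prod_type]
    exact Finset.sum_congr rfl fun i _ => Finset.sum_congr rfl fun j _ => mul_comm _ _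
  have hS := posSemidef_conjTranspose_mul_self M
  set s : ℝ := (α - 1) / 2 with hsdef
  set T : Matrix C C ℂ := matRpow (Mᴴ * M) s with hTdef
  have hTh : T.IsHermitian := matRpow_isHermitian hS.1 s
  have hsig : matRpow (trFstSnd ρ) s = Tᵀ := by rw [hfs, matRpow_transpose hS.1]
  have hkey : matRpow (M * Mᴴ) α = M * T * T * Mᴴ := key_identity M α
  ext b b'
  simp only [trFst, trFstThird, of_apply]
  rw [h3, hkey]
  have hpoint : ∀ x y : A × B × C,
      (((1 : Matrix A A ℂ) ⊗ₖ ((1 : Matrix B B ℂ) ⊗ₖ matRpow (trFstSnd ρ) s)) * ρ *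
        ((1 : Matrix A A ℂ) ⊗ₖ ((1 : Matrix B B ℂ) ⊗ₖ matRpow (trFstSnd ρ) s))) x y
        = (M * T) (x.1, x.2.1) x.2.2 * star ((M * T) (y.1, y.2.1) y.2.2) := by
    intro x y
    obtain ⟨a, b, k⟩ := x
    obtain ⟨a', b', k'⟩ := y
    rw [hsig]
    simp only [hsig, mul_apply, kroneckerMap_apply, one_apply, vecMulVec_apply, hρ,
      transpose_apply, conjTranspose_apply, hM, of_apply, Fintype.sum_prod_type,
      ite_mul, one_mul, zero_mul, mul_ite, mul_one, mul_zero, Pi.star_apply,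
      Finset.sum_ite_irrel, Finset.sum_const_zero,
      Finset.sum_ite_eq, Finset.sum_ite_eq', Finset.mem_univ, if_true, star_sum, star_mul']
    have hT' : ∀ u v : C, star (T u v) = T v u := fun u v => by
      rw [← hTh.eq, conjTranspose_apply, star_star, hTh.eq]
    simp only [hT', Finset.sum_mul, Finset.mul_sum]
    exact Finset.sum_congr rfl fun x _ => Finset.sum_congr rfl fun y _ => by ring
  simp only [hpoint]
  have hMT : M * T * T * Mᴴ = (M * T) * (M * T)ᴴ := by
    rw [conjTranspose_mul, hTh.eq]
    simp only [Matrix.mul_assoc]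
  rw [hMT]
  refine Finset.sum_congr rfl fun a _ => ?_
  rw [mul_apply]
  exact Finset.sum_congr rfl fun k _ => by rw [conjTranspose_apply]
end

section
/- Let ψ be a unit vector in the tensor product ℂ^(M×C), let ρ_M = tr_C(ψψ*) and ρ_C = tr_M(ψψ*) be its reduced density matrices. Then for every real t, (ρ_M^t ⊗ 1_C) ψ = (1_M ⊗ ρ_C^t) ψ as vectors in ℂ^(M×C), where the real matrix powers of the positive semidefinite matrices ρ_M and ρ_C are taken on their supports (0^t = 0). -/
open scoped Kronecker ComplexOrder
open Matrix

section Aux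
open Polynomial Matrix
variable {n : Type*} [Fintype n] [DecidableEq n]

variable {n : Type*} [Fintype n] [DecidableEq n]

lemma aeval_diagonal (d : n → ℂ) (p : ℂ[X]) :
    aeval (Matrix.diagonal d) p = Matrix.diagonal (fun i => p.eval (d i)) := by
  induction p using Polynomial.induction_on' with
  | add p q hp hq => simp [hp, hq, diagonal_add]
  | monomial k a =>
      ext i j
      simp only [aeval_monomial, diagonal_pow, Algebra.algebraMap_eq_smul_one,
        smul_mul_assoc, one_mul, Matrix.smul_apply, Matrix.diagonal_apply, eval_monomial]
      split_ifs <;> simp [Pi.pow_apply]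

lemma aeval_unitary_conj (U D : Matrix n n ℂ) (hU : U * star U = 1) (hU' : star U * U = 1)
    (p : ℂ[X]) : aeval (U * D * star U) p = U * aeval D p * star U := by
  induction p using Polynomial.induction_on' with
  | add p q hp hq => simp [hp, hq, mul_add, add_mul]
  | monomial k a =>
      have key : ∀ k : ℕ, (U * D * star U) ^ k = U * D ^ k * star U := by
        intro k
        induction k with
        | zero => simpa using hU.symm
        | succ k ih =>
            rw [pow_succ, ih, pow_succ]
            calc U * D ^ k * star U * (U * D * star U)
                = U * D ^ k * (star U * U) * (D * star U) := by
                  simp only [Matrix.mul_assoc]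
              _ = U * (D ^ k * D) * star U := by
                  rw [hU']; simp only [Matrix.mul_assoc, Matrix.one_mul]
      simp only [aeval_monomial, key, Algebra.algebraMap_eq_smul_one, smul_mul_assoc,
        one_mul, mul_smul_comm, eval_monomial]

lemma aeval_mul_swap {m c : Type*} [Fintype m] [DecidableEq m] [Fintype c] [DecidableEq c]
    (B : Matrix m c ℂ) (p : ℂ[X]) :
    aeval (B * Bᴴ) p * B = B * aeval (Bᴴ * B) p := by
  induction p using Polynomial.induction_on' with
  | add p q hp hq => simp [hp, hq, Matrix.add_mul, Matrix.mul_add]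
  | monomial k a =>
      have key : ∀ k : ℕ, (B * Bᴴ) ^ k * B = B * (Bᴴ * B) ^ k := by
        intro k
        induction k with
        | zero => simp
        | succ k ih =>
            rw [pow_succ, pow_succ, Matrix.mul_assoc, Matrix.mul_assoc B,
              ← Matrix.mul_assoc ((B * Bᴴ) ^ k), ih, Matrix.mul_assoc]
      simp only [aeval_monomial, Algebra.algebraMap_eq_smul_one, smul_mul_assoc, one_mul,
        Matrix.smul_mul, Matrix.mul_smul, key]

lemma aeval_transpose_s5 (A : Matrix n n ℂ) (p : ℂ[X]) :
    (aeval A p)ᵀ = aeval Aᵀ p := by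
  induction p using Polynomial.induction_on' with
  | add p q hp hq => simp [hp, hq, transpose_add]
  | monomial k a =>
      simp [aeval_monomial, Algebra.algebraMap_eq_smul_one, smul_mul_assoc, one_mul,
        transpose_smul, transpose_pow]


lemma matRpow_eq_aeval_s5 {A : Matrix n n ℂ} (hA : A.IsHermitian) (t : ℝ) (p : Polynomial ℂ)
    (hp : ∀ i, p.eval ((hA.eigenvalues i : ℂ)) =
      if hA.eigenvalues i = 0 then 0 else ((hA.eigenvalues i ^ t : ℝ) : ℂ)) :
    matRpow A t = aeval A p := by
  conv_rhs => rw [hA.spectral_theorem]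
  rw [Unitary.conjStarAlgAut_apply]
  rw [aeval_unitary_conj _ _ (Matrix.mem_unitaryGroup_iff.mp hA.eigenvectorUnitary.2)
      (Matrix.mem_unitaryGroup_iff'.mp hA.eigenvectorUnitary.2), aeval_diagonal]
  rw [matRpow, dif_pos hA]
  have hd : (fun i => (((if hA.eigenvalues i = 0 then (0 : ℝ) else hA.eigenvalues i ^ t) : ℝ) : ℂ))
      = (fun i => p.eval ((RCLike.ofReal ∘ hA.eigenvalues) i)) := by
    funext i
    have h1 : p.eval ((RCLike.ofReal ∘ hA.eigenvalues) i) = p.eval ((hA.eigenvalues i : ℂ)) := rfl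
    rw [h1, hp i]
    simp [apply_ite (fun x : ℝ => (x : ℂ))]
  rw [hd]

end Aux

theorem rpow_marginal_swap {m c : Type*}
    [Fintype m] [DecidableEq m] [Fintype c] [DecidableEq c]
    (ψ : m × c → ℂ) (hψ : star ψ ⬝ᵥ ψ = 1) (t : ℝ) :
    (matRpow (trSnd (vecMulVec ψ (star ψ))) t ⊗ₖ (1 : Matrix c c ℂ)) *ᵥ ψ =
      ((1 : Matrix m m ℂ) ⊗ₖ matRpow (trFst (vecMulVec ψ (star ψ))) t) *ᵥ ψ := by
  classical
  set ρM := trSnd (vecMulVec ψ (star ψ)) with hρMdef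
  set ρC := trFst (vecMulVec ψ (star ψ)) with hρCdef
  set Ψ : Matrix m c ℂ := Matrix.of (fun i j => ψ (i, j)) with hΨdef
  have hM : ρM = Ψ * Ψᴴ := by
    ext i i'
    simp [hρMdef, trSnd, vecMulVec, Matrix.mul_apply, Matrix.conjTranspose_apply, hΨdef]
  have hC : ρC = (Ψᴴ * Ψ)ᵀ := by
    ext j j'
    simp [hρCdef, trFst, vecMulVec, Matrix.mul_apply, Matrix.conjTranspose_apply, hΨdef,
      mul_comm]
  have hρM : ρM.IsHermitian := by
    rw [hM]; exact Matrix.isHermitian_mul_conjTranspose_self Ψ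
  have hρC : ρC.IsHermitian := by
    rw [hC]; exact (Matrix.isHermitian_conjTranspose_mul_self Ψ).transpose
  -- interpolation polynomial
  set S : Finset ℂ :=
    (Finset.univ.image fun i => ((hρM.eigenvalues i : ℝ) : ℂ)) ∪
      (Finset.univ.image fun j => ((hρC.eigenvalues j : ℝ) : ℂ)) with hSdef
  set g : ℂ → ℂ := fun z => if z = 0 then 0 else ((z.re ^ t : ℝ) : ℂ) with hgdef
  set p : Polynomial ℂ := Lagrange.interpolate S id g with hpdef
  have hInj : Set.InjOn id (S : Set ℂ) := fun a _ b _ h => h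
  have heval : ∀ x ∈ S, p.eval x = g x := by
    intro x hx
    exact Lagrange.eval_interpolate_at_node g hInj hx
  have hmatch : ∀ (lam : ℝ), ((lam : ℂ) ∈ S) →
      p.eval (lam : ℂ) = if lam = 0 then 0 else ((lam ^ t : ℝ) : ℂ) := by
    intro lam hlam
    rw [heval _ hlam, hgdef]
    simp [Complex.ofReal_eq_zero]
  have key1 : matRpow ρM t = Polynomial.aeval ρM p := by
    refine matRpow_eq_aeval_s5 hρM t p fun i => hmatch _ ?_
    exact Finset.mem_union_left _ (Finset.mem_image_of_mem _ (Finset.mem_univ i))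
  have key2 : matRpow ρC t = Polynomial.aeval ρC p := by
    refine matRpow_eq_aeval_s5 hρC t p fun j => hmatch _ ?_
    exact Finset.mem_union_right _ (Finset.mem_image_of_mem _ (Finset.mem_univ j))
  -- matrix identity
  have hmain : matRpow ρM t * Ψ = Ψ * (matRpow ρC t)ᵀ := by
    rw [key1, key2, hM, hC, aeval_transpose_s5, Matrix.transpose_transpose]
    exact aeval_mul_swap Ψ p
  -- pointwise extraction
  funext x
  obtain ⟨i, j⟩ := x
  have hL : ((matRpow ρM t ⊗ₖ (1 : Matrix c c ℂ)) *ᵥ ψ) (i, j) =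
      (matRpow ρM t * Ψ) i j := by
    simp [Matrix.mulVec, dotProduct, Fintype.sum_prod_type, Matrix.mul_apply,
      Matrix.one_apply, ite_mul, mul_ite, hΨdef]
  have hR : (((1 : Matrix m m ℂ) ⊗ₖ matRpow ρC t) *ᵥ ψ) (i, j) =
      (Ψ * (matRpow ρC t)ᵀ) i j := by
    simp [Matrix.mulVec, dotProduct, Fintype.sum_prod_type, Matrix.mul_apply,
      Matrix.one_apply, ite_mul, mul_ite, hΨdef, Matrix.transpose_apply, mul_comm]
  rw [hL, hR, hmain]
end

section
/- Let ρ_AB be a density matrix on a bipartite space with marginal ρ_B = tr_A ρ_AB. Then the supremum over all density matrices σ_B on the B-system whose kernel is contained in the kernel of ρ_B of −D(ρ_AB ‖ 1_A ⊗ σ_B) equals −D(ρ_AB ‖ 1_A ⊗ ρ_B), where D(ρ‖σ) := tr(ρ·(log ρ − log σ)) is the quantum relative entropy; that is, σ_B = ρ_B is the optimizer. -/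
open scoped Kronecker ComplexOrder
open Matrix

namespace RelEntAux
set_option linter.unusedSectionVars false
variable {n : Type*} [Fintype n] [DecidableEq n]

/-- Conjugation by a unitary as an algebra homomorphism. -/
noncomputable def conjAlgHom (V : Matrix n n ℂ) (hV : V ∈ Matrix.unitaryGroup n ℂ) :
    Matrix n n ℂ →ₐ[ℂ] Matrix n n ℂ where
  toFun X := V * X * star V
  map_one' := by show V * 1 * star V = 1; rw [mul_one, Matrix.mem_unitaryGroup_iff.mp hV]
  map_mul' X Y := by
    have h : star V * V = 1 := Matrix.mem_unitaryGroup_iff'.mp hV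
    calc V * (X * Y) * star V = (V * X) * (star V * V) * (Y * star V) := by
          rw [h]; noncomm_ring
      _ = V * X * star V * (V * Y * star V) := by noncomm_ring
  map_zero' := by simp
  map_add' X Y := by noncomm_ring
  commutes' r := by
    simp only [Algebra.algebraMap_eq_smul_one, Matrix.mul_smul, Matrix.smul_mul, mul_one,
      Matrix.mem_unitaryGroup_iff.mp hV]

lemma aeval_conj (V : Matrix n n ℂ) (hV : V ∈ Matrix.unitaryGroup n ℂ) (d : n → ℂ)
    (p : Polynomial ℂ) :
    Polynomial.aeval (V * Matrix.diagonal d * star V) p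
      = V * Matrix.diagonal (fun i => Polynomial.eval (d i) p) * star V := by
  have h1 : V * Matrix.diagonal d * star V = conjAlgHom V hV (Matrix.diagonalAlgHom ℂ d) := rfl
  rw [h1, Polynomial.aeval_algHom_apply, Polynomial.aeval_algHom_apply]
  show V * Matrix.diagonal _ * star V = _
  have : (Polynomial.aeval d) p = fun i => Polynomial.eval (d i) p := by
    funext i
    rw [Polynomial.aeval_fn_apply]; simp
  rw [this]


lemma fc_eq (f : ℝ → ℝ) {A : Matrix n n ℂ} (hA : A.IsHermitian)
    (V : Matrix n n ℂ) (hV : V ∈ Matrix.unitaryGroup n ℂ) (d : n → ℝ)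
    (hAd : A = V * Matrix.diagonal (fun i => (d i : ℂ)) * star V) :
    (hA.eigenvectorUnitary : Matrix n n ℂ) *
        Matrix.diagonal (fun i => ((f (hA.eigenvalues i) : ℝ) : ℂ)) *
        star (hA.eigenvectorUnitary : Matrix n n ℂ)
      = V * Matrix.diagonal (fun i => ((f (d i) : ℝ) : ℂ)) * star V := by
  classical
  set g : ℂ → ℂ := fun z => ((f z.re : ℝ) : ℂ) with hg
  set s : Finset ℂ := Finset.image (fun i => ((d i : ℝ) : ℂ)) Finset.univ ∪
      Finset.image (fun i => ((hA.eigenvalues i : ℝ) : ℂ)) Finset.univ with hs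
  set p : Polynomial ℂ := Lagrange.interpolate s id g with hp
  have hnode : ∀ z ∈ s, Polynomial.eval z p = g z := by
    intro z hz
    exact Lagrange.eval_interpolate_at_node g (Function.injective_id.injOn) hz
  have key : ∀ (W : Matrix n n ℂ), W ∈ Matrix.unitaryGroup n ℂ → ∀ (e : n → ℝ),
      (∀ i, ((e i : ℝ) : ℂ) ∈ s) →
      Polynomial.aeval (W * Matrix.diagonal (fun i => ((e i : ℝ) : ℂ)) * star W) p
        = W * Matrix.diagonal (fun i => ((f (e i) : ℝ) : ℂ)) * star W := by
    intro W hW e he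
    rw [aeval_conj W hW]
    have : (fun i => Polynomial.eval ((e i : ℝ) : ℂ) p) = fun i => ((f (e i) : ℝ) : ℂ) := by
      funext i
      rw [hnode _ (he i), hg]
      norm_num
    rw [this]
  have h1 := key V hV d (fun i => Finset.mem_union_left _ (Finset.mem_image_of_mem _ (Finset.mem_univ i)))
  have h2 := key (hA.eigenvectorUnitary : Matrix n n ℂ) hA.eigenvectorUnitary.2 hA.eigenvalues
      (fun i => Finset.mem_union_right _ (Finset.mem_image_of_mem _ (Finset.mem_univ i)))
  have hspec : A = (hA.eigenvectorUnitary : Matrix n n ℂ) *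
      Matrix.diagonal (fun i => ((hA.eigenvalues i : ℝ) : ℂ)) *
      star (hA.eigenvectorUnitary : Matrix n n ℂ) := by
    have := hA.spectral_theorem
    convert this using 3
    rfl
  rw [← h2, ← h1, ← hspec, ← hAd]

lemma matLog_eq {A : Matrix n n ℂ} (hA : A.IsHermitian) (V : Matrix n n ℂ)
    (hV : V ∈ Matrix.unitaryGroup n ℂ) (d : n → ℝ)
    (hAd : A = V * Matrix.diagonal (fun i => (d i : ℂ)) * star V) :
    matLog A = V * Matrix.diagonal (fun i => ((Real.log (d i) : ℝ) : ℂ)) * star V := by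
  rw [matLog, dif_pos hA]
  exact fc_eq Real.log hA V hV d hAd

lemma matLog_spec {A : Matrix n n ℂ} (hA : A.IsHermitian) :
    matLog A = (hA.eigenvectorUnitary : Matrix n n ℂ) *
      Matrix.diagonal (fun i => ((Real.log (hA.eigenvalues i) : ℝ) : ℂ)) *
      star (hA.eigenvectorUnitary : Matrix n n ℂ) := by
  rw [matLog, dif_pos hA]

lemma spectral {A : Matrix n n ℂ} (hA : A.IsHermitian) :
    A = (hA.eigenvectorUnitary : Matrix n n ℂ) *
      Matrix.diagonal (fun i => ((hA.eigenvalues i : ℝ) : ℂ)) *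
      star (hA.eigenvectorUnitary : Matrix n n ℂ) := by
  have := hA.spectral_theorem
  convert this using 3
  rfl

section kron
variable {ι κ : Type*} [Fintype ι] [DecidableEq ι] [Fintype κ] [DecidableEq κ]

lemma kron_conjTranspose (A : Matrix ι ι ℂ) (B : Matrix κ κ ℂ) :
    (A ⊗ₖ B)ᴴ = Aᴴ ⊗ₖ Bᴴ := by
  ext ⟨i, j⟩ ⟨i', j'⟩
  simp [Matrix.conjTranspose_apply, Matrix.kroneckerMap_apply]

lemma one_kron_mem_unitary (V : Matrix κ κ ℂ) (hV : V ∈ Matrix.unitaryGroup κ ℂ) :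
    (1 : Matrix ι ι ℂ) ⊗ₖ V ∈ Matrix.unitaryGroup (ι × κ) ℂ := by
  rw [Matrix.mem_unitaryGroup_iff, Matrix.star_eq_conjTranspose, kron_conjTranspose,
    Matrix.conjTranspose_one, ← Matrix.mul_kronecker_mul, one_mul,
    show V * Vᴴ = 1 from by rw [← Matrix.star_eq_conjTranspose]; exact Matrix.mem_unitaryGroup_iff.mp hV,
    Matrix.one_kronecker_one]

lemma matLog_one_kron (σ : Matrix κ κ ℂ) (hσ : σ.IsHermitian) :
    matLog ((1 : Matrix ι ι ℂ) ⊗ₖ σ) = (1 : Matrix ι ι ℂ) ⊗ₖ matLog σ := by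
  set V := (hσ.eigenvectorUnitary : Matrix κ κ ℂ) with hVdef
  have hkh : ((1 : Matrix ι ι ℂ) ⊗ₖ σ).IsHermitian := by
    rw [Matrix.IsHermitian, kron_conjTranspose, Matrix.conjTranspose_one, hσ.eq]
  have hdiag : Matrix.diagonal (fun p : ι × κ => ((hσ.eigenvalues p.2 : ℝ) : ℂ)) =
      (1 : Matrix ι ι ℂ) ⊗ₖ Matrix.diagonal (fun j => ((hσ.eigenvalues j : ℝ) : ℂ)) := by
    rw [← Matrix.diagonal_one, Matrix.diagonal_kronecker_diagonal]
    simp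
  have hstar : star ((1 : Matrix ι ι ℂ) ⊗ₖ V) = (1 : Matrix ι ι ℂ) ⊗ₖ star V := by
    rw [Matrix.star_eq_conjTranspose, kron_conjTranspose, Matrix.conjTranspose_one,
      Matrix.star_eq_conjTranspose]
  have hdec : (1 : Matrix ι ι ℂ) ⊗ₖ σ = ((1 : Matrix ι ι ℂ) ⊗ₖ V) *
      Matrix.diagonal (fun p : ι × κ => ((hσ.eigenvalues p.2 : ℝ) : ℂ)) *
      star ((1 : Matrix ι ι ℂ) ⊗ₖ V) := by
    rw [hstar, hdiag, ← Matrix.mul_kronecker_mul, ← Matrix.mul_kronecker_mul, one_mul, one_mul]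
    rw [← spectral hσ]
  have hdiag2 : Matrix.diagonal (fun p : ι × κ => ((Real.log (hσ.eigenvalues p.2) : ℝ) : ℂ)) =
      (1 : Matrix ι ι ℂ) ⊗ₖ Matrix.diagonal (fun j => ((Real.log (hσ.eigenvalues j) : ℝ) : ℂ)) := by
    rw [← Matrix.diagonal_one, Matrix.diagonal_kronecker_diagonal]
    simp
  rw [matLog_eq hkh _ (one_kron_mem_unitary V hσ.eigenvectorUnitary.2) _ hdec, hstar, hdiag2,
    ← Matrix.mul_kronecker_mul, ← Matrix.mul_kronecker_mul, one_mul, one_mul, matLog_spec hσ]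
end kron

lemma trace_conj_mul_conj (U V : Matrix n n ℂ) (p q : n → ℝ) :
    ((U * Matrix.diagonal (fun i => ((p i : ℝ) : ℂ)) * star U) *
      (V * Matrix.diagonal (fun i => ((q i : ℝ) : ℂ)) * star V)).trace.re
    = ∑ j, ∑ k, p j * q k * Complex.normSq ((star U * V) j k) := by
  set W := star U * V with hW
  have h1 : ((U * Matrix.diagonal (fun i => ((p i : ℝ) : ℂ)) * star U) *
      (V * Matrix.diagonal (fun i => ((q i : ℝ) : ℂ)) * star V)).trace
      = (Matrix.diagonal (fun i => ((p i : ℝ) : ℂ)) * W *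
          Matrix.diagonal (fun i => ((q i : ℝ) : ℂ)) * star W).trace := by
    rw [hW, StarMul.star_mul, star_star]
    rw [show (U * Matrix.diagonal (fun i => ((p i : ℝ) : ℂ)) * star U) *
      (V * Matrix.diagonal (fun i => ((q i : ℝ) : ℂ)) * star V)
      = U * (Matrix.diagonal (fun i => ((p i : ℝ) : ℂ)) * (star U * V) *
          Matrix.diagonal (fun i => ((q i : ℝ) : ℂ)) * star V) from by noncomm_ring,
      Matrix.trace_mul_comm]
    congr 1
    noncomm_ring
  have h2 : (Matrix.diagonal (fun i => ((p i : ℝ) : ℂ)) * W *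
      Matrix.diagonal (fun i => ((q i : ℝ) : ℂ)) * star W).trace
      = ∑ j, ∑ k, (((p j * q k * Complex.normSq (W j k) : ℝ)) : ℂ) := by
    simp only [Matrix.trace, Matrix.diag_apply, Matrix.mul_apply, Matrix.diagonal_apply,
      Matrix.star_apply, Finset.sum_ite_eq, Finset.mem_univ, if_true, ite_mul, zero_mul,
      Finset.sum_ite_eq', mul_ite, mul_zero]
    congr 1
    funext j
    congr 1
    funext k
    rw [RCLike.star_def]
    rw [show ((p j : ℝ) : ℂ) * W j k * ((q k : ℝ) : ℂ) * (starRingEnd ℂ) (W j k)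
      = ((p j : ℝ) : ℂ) * ((q k : ℝ) : ℂ) * (W j k * (starRingEnd ℂ) (W j k)) from by ring,
      Complex.mul_conj]
    push_cast
    ring
  rw [h1, h2]
  norm_cast

lemma klein_pointwise {p q c : ℝ} (hp : 0 ≤ p) (hq : 0 ≤ q) (hc : 0 ≤ c)
    (hker : q = 0 → p * c = 0) :
    c * (p - q) ≤ c * (p * Real.log p - p * Real.log q) := by
  rcases eq_or_lt_of_le hc with hc0 | hcpos
  · rw [← hc0]; simp
  rcases eq_or_lt_of_le hq with hq0 | hqpos
  · have hp0 : p = 0 := by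
      have := hker hq0.symm
      rcases mul_eq_zero.mp this with h | h
      · exact h
      · exact absurd h (ne_of_gt hcpos)
    rw [hp0, ← hq0]; simp
  rcases eq_or_lt_of_le hp with hp0 | hppos
  · rw [← hp0]
    simp only [zero_mul, sub_zero, zero_sub, mul_neg]
    have : 0 ≤ c * q := mul_nonneg hc hq
    linarith
  · have hlog : Real.log (q / p) ≤ q / p - 1 := Real.log_le_sub_one_of_pos (by positivity)
    rw [Real.log_div (ne_of_gt hqpos) (ne_of_gt hppos)] at hlog
    have h2 : p * (Real.log q - Real.log p) ≤ p * (q / p - 1) :=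
      mul_le_mul_of_nonneg_left hlog hp
    have h3 : p * (q / p - 1) = q - p := by field_simp
    have h4 : p - q ≤ p * Real.log p - p * Real.log q := by nlinarith [h2, h3]
    exact mul_le_mul_of_nonneg_left h4 hc

lemma klein_sum (p q : n → ℝ) (c : n → n → ℝ) (hp : ∀ j, 0 ≤ p j) (hq : ∀ k, 0 ≤ q k)
    (hc : ∀ j k, 0 ≤ c j k) (hrow : ∀ j, ∑ k, c j k = 1) (hcol : ∀ k, ∑ j, c j k = 1)
    (hsp : ∑ j, p j = 1) (hsq : ∑ k, q k = 1)
    (hker : ∀ j k, q k = 0 → p j * c j k = 0) :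
    ∑ j, ∑ k, p j * Real.log (q k) * c j k ≤ ∑ j, p j * Real.log (p j) := by
  have key : ∑ j, ∑ k, c j k * (p j - q k) ≤
      ∑ j, ∑ k, c j k * (p j * Real.log (p j) - p j * Real.log (q k)) :=
    Finset.sum_le_sum fun j _ => Finset.sum_le_sum fun k _ =>
      klein_pointwise (hp j) (hq k) (hc j k) (hker j k)
  have lhs_eq : ∑ j, ∑ k, c j k * (p j - q k) = 0 := by
    have e1 : ∑ j, ∑ k, c j k * p j = 1 := by
      rw [show (∑ j, ∑ k, c j k * p j) = ∑ j, p j * ∑ k, c j k from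
        Finset.sum_congr rfl fun j _ => by rw [Finset.mul_sum]; exact Finset.sum_congr rfl fun k _ => by ring]
      simp only [hrow, mul_one, hsp]
    have e2 : ∑ j, ∑ k, c j k * q k = 1 := by
      rw [Finset.sum_comm]
      rw [show (∑ k, ∑ j, c j k * q k) = ∑ k, q k * ∑ j, c j k from
        Finset.sum_congr rfl fun k _ => by rw [Finset.mul_sum]; exact Finset.sum_congr rfl fun j _ => by ring]
      simp only [hcol, mul_one, hsq]
    have : ∑ j, ∑ k, c j k * (p j - q k) = (∑ j, ∑ k, c j k * p j) - ∑ j, ∑ k, c j k * q k := by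
      rw [← Finset.sum_sub_distrib]
      exact Finset.sum_congr rfl fun j _ => by rw [← Finset.sum_sub_distrib]; exact Finset.sum_congr rfl fun k _ => by ring
    rw [this, e1, e2, sub_self]
  have rhs_eq : ∑ j, ∑ k, c j k * (p j * Real.log (p j) - p j * Real.log (q k))
      = (∑ j, p j * Real.log (p j)) - ∑ j, ∑ k, p j * Real.log (q k) * c j k := by
    have : ∀ j, ∑ k, c j k * (p j * Real.log (p j) - p j * Real.log (q k))
        = p j * Real.log (p j) - ∑ k, p j * Real.log (q k) * c j k := by
      intro j
      rw [show (∑ k, c j k * (p j * Real.log (p j) - p j * Real.log (q k)))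
          = (p j * Real.log (p j)) * (∑ k, c j k) - ∑ k, p j * Real.log (q k) * c j k from by
        rw [Finset.mul_sum, ← Finset.sum_sub_distrib]
        exact Finset.sum_congr rfl fun k _ => by ring]
      rw [hrow j, mul_one]
    rw [Finset.sum_congr rfl fun j _ => this j, Finset.sum_sub_distrib]
  rw [lhs_eq, rhs_eq] at key
  linarith

lemma trace_conj (U : Matrix n n ℂ) (hU : U ∈ Matrix.unitaryGroup n ℂ) (D : Matrix n n ℂ) :
    (U * D * star U).trace = D.trace := by
  rw [Matrix.trace_mul_comm, ← Matrix.mul_assoc, Matrix.mem_unitaryGroup_iff'.mp hU, one_mul]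

lemma sum_eigenvalues_eq_one {A : Matrix n n ℂ} (hA : A.IsHermitian) (htr : A.trace = 1) :
    ∑ j, hA.eigenvalues j = 1 := by
  have h : A.trace = ∑ j, ((hA.eigenvalues j : ℝ) : ℂ) := by
    rw [show A.trace = ((hA.eigenvectorUnitary : Matrix n n ℂ) *
        Matrix.diagonal (fun i => ((hA.eigenvalues i : ℝ) : ℂ)) *
        star (hA.eigenvectorUnitary : Matrix n n ℂ)).trace from congrArg _ (spectral hA),
      trace_conj _ hA.eigenvectorUnitary.2, Matrix.trace_diagonal]
  rw [htr] at h
  exact_mod_cast h.symm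

lemma trace_mul_matLog {A B : Matrix n n ℂ} (hA : A.IsHermitian) (hB : B.IsHermitian) :
    (A * matLog B).trace.re = ∑ j, ∑ k, hA.eigenvalues j * Real.log (hB.eigenvalues k) *
      Complex.normSq ((star (hA.eigenvectorUnitary : Matrix n n ℂ) *
        (hB.eigenvectorUnitary : Matrix n n ℂ)) j k) := by
  have h := trace_conj_mul_conj (hA.eigenvectorUnitary : Matrix n n ℂ)
    (hB.eigenvectorUnitary : Matrix n n ℂ) hA.eigenvalues (fun k => Real.log (hB.eigenvalues k))
  rw [← spectral hA, ← matLog_spec hB] at h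
  exact h

lemma trace_mul_matLog_self {A : Matrix n n ℂ} (hA : A.IsHermitian) :
    (A * matLog A).trace.re = ∑ j, hA.eigenvalues j * Real.log (hA.eigenvalues j) := by
  rw [trace_mul_matLog hA hA, Matrix.mem_unitaryGroup_iff'.mp hA.eigenvectorUnitary.2]
  refine Finset.sum_congr rfl fun j _ => ?_
  rw [Fintype.sum_eq_single j (fun k hk => by
    simp [Matrix.one_apply, (Ne.symm hk), Complex.normSq_zero])]
  simp [Matrix.one_apply]

lemma log_trace_le {ρB σ : Matrix n n ℂ} (hρB : ρB.PosSemidef) (hσ : σ.PosSemidef)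
    (hρBtr : ρB.trace = 1) (hσtr : σ.trace = 1)
    (hk : LinearMap.ker σ.mulVecLin ≤ LinearMap.ker ρB.mulVecLin) :
    (ρB * matLog σ).trace.re ≤ (ρB * matLog ρB).trace.re := by
  classical
  set U := (hρB.1.eigenvectorUnitary : Matrix n n ℂ) with hU
  set V := (hσ.1.eigenvectorUnitary : Matrix n n ℂ) with hV
  set p := hρB.1.eigenvalues with hpdef
  set q := hσ.1.eigenvalues with hqdef
  set W := star U * V with hW
  have hWmem : W ∈ Matrix.unitaryGroup n ℂ :=
    Submonoid.mul_mem _ (Unitary.star_mem hρB.1.eigenvectorUnitary.2) hσ.1.eigenvectorUnitary.2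
  have hWrow : ∀ j, ∑ k, Complex.normSq (W j k) = 1 := by
    intro j
    have h1 : (W * star W) j j = 1 := by
      rw [Matrix.mem_unitaryGroup_iff.mp hWmem, Matrix.one_apply_eq]
    rw [Matrix.mul_apply] at h1
    have h2 : ∀ k, W j k * (star W) k j = ((Complex.normSq (W j k) : ℝ) : ℂ) := fun k => by
      rw [Matrix.star_apply, RCLike.star_def, Complex.mul_conj]
    rw [Finset.sum_congr rfl fun k _ => h2 k] at h1
    exact_mod_cast h1
  have hWcol : ∀ k, ∑ j, Complex.normSq (W j k) = 1 := by
    intro k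
    have h1 : (star W * W) k k = 1 := by
      rw [Matrix.mem_unitaryGroup_iff'.mp hWmem, Matrix.one_apply_eq]
    rw [Matrix.mul_apply] at h1
    have h2 : ∀ j, (star W) k j * W j k = ((Complex.normSq (W j k) : ℝ) : ℂ) := fun j => by
      rw [Matrix.star_apply, RCLike.star_def, mul_comm, Complex.mul_conj]
    rw [Finset.sum_congr rfl fun j _ => h2 j] at h1
    exact_mod_cast h1
  have hker : ∀ j k, q k = 0 → p j * Complex.normSq (W j k) = 0 := by
    intro j k hqk
    have hv : σ *ᵥ (V *ᵥ Pi.single k 1) = 0 := by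
      rw [Matrix.mulVec_mulVec]
      have hσV : σ * V = V * Matrix.diagonal (fun i => ((q i : ℝ) : ℂ)) := by
        conv_lhs => rw [spectral hσ.1]
        rw [Matrix.mul_assoc, Matrix.mem_unitaryGroup_iff'.mp hσ.1.eigenvectorUnitary.2, mul_one]
      rw [hσV]
      funext i
      simp only [Matrix.mulVec_single_one, Matrix.col_apply, Matrix.mul_diagonal, mul_one, Pi.zero_apply]
      rw [hqk]
      simp
    have hmem : (V *ᵥ Pi.single k 1) ∈ LinearMap.ker σ.mulVecLin := by
      rw [LinearMap.mem_ker, Matrix.mulVecLin_apply]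
      exact hv
    have hρv : ρB *ᵥ (V *ᵥ Pi.single k 1) = 0 := by
      have := hk hmem
      rwa [LinearMap.mem_ker, Matrix.mulVecLin_apply] at this
    have hzero : ((Matrix.diagonal (fun i => ((p i : ℝ) : ℂ)) * W) *ᵥ Pi.single k 1) j = 0 := by
      have e1 : Matrix.diagonal (fun i => ((p i : ℝ) : ℂ)) * W = star U * ρB * V := by
        conv_rhs => rw [spectral hρB.1]
        rw [hW, hU]
        rw [show star U * (U * Matrix.diagonal (fun i => ((p i : ℝ) : ℂ)) * star U) * V
            = (star U * U) * Matrix.diagonal (fun i => ((p i : ℝ) : ℂ)) * (star U * V) from by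
          noncomm_ring, Matrix.mem_unitaryGroup_iff'.mp hρB.1.eigenvectorUnitary.2, one_mul]
      rw [e1, ← Matrix.mulVec_mulVec, ← Matrix.mulVec_mulVec, hρv]
      simp
    simp only [Matrix.mulVec_single_one, Matrix.col_apply, mul_one, Matrix.diagonal_mul] at hzero
    rcases mul_eq_zero.mp hzero with h | h
    · rw [show p j = 0 from by exact_mod_cast h, zero_mul]
    · rw [h, Complex.normSq_zero, mul_zero]
  have hL := trace_mul_matLog hρB.1 hσ.1
  have hR := trace_mul_matLog_self hρB.1
  rw [hL, hR]
  exact klein_sum p q (fun j k => Complex.normSq (W j k)) hρB.eigenvalues_nonneg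
    hσ.eigenvalues_nonneg (fun j k => Complex.normSq_nonneg _) hWrow hWcol
    (sum_eigenvalues_eq_one hρB.1 hρBtr) (sum_eigenvalues_eq_one hσ.1 hσtr) hker

section prodsec
variable {ι κ : Type*} [Fintype ι] [DecidableEq ι] [Fintype κ] [DecidableEq κ]

lemma trFst_trace (ρ : Matrix (ι × κ) (ι × κ) ℂ) : (trFst ρ).trace = ρ.trace := by
  simp only [Matrix.trace, Matrix.diag_apply, trFst, Matrix.of_apply, Fintype.sum_prod_type]
  exact Finset.sum_comm

lemma trace_mul_one_kron (ρ : Matrix (ι × κ) (ι × κ) ℂ) (X : Matrix κ κ ℂ) :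
    (ρ * ((1 : Matrix ι ι ℂ) ⊗ₖ X)).trace = (trFst ρ * X).trace := by
  have entry : ∀ (i : ι) (j : κ), (ρ * ((1 : Matrix ι ι ℂ) ⊗ₖ X)) (i, j) (i, j)
      = ∑ j', ρ (i, j) (i, j') * X j' j := by
    intro i j
    rw [Matrix.mul_apply, Fintype.sum_prod_type]
    rw [Fintype.sum_eq_single i (fun a ha => by simp [Matrix.one_apply, ha])]
    simp [Matrix.one_apply]
  have : (ρ * ((1 : Matrix ι ι ℂ) ⊗ₖ X)).trace = ∑ i : ι, ∑ j : κ, ∑ j' : κ,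
      ρ (i, j) (i, j') * X j' j := by
    rw [Matrix.trace, Fintype.sum_prod_type]
    exact Finset.sum_congr rfl fun i _ => Finset.sum_congr rfl fun j _ => entry i j
  rw [this, Matrix.trace]
  rw [Finset.sum_comm]
  refine Finset.sum_congr rfl fun j _ => ?_
  simp only [Matrix.diag_apply, Matrix.mul_apply, trFst, Matrix.of_apply, Finset.sum_mul]
  rw [Finset.sum_comm]

lemma trFst_posSemidef (ρ : Matrix (ι × κ) (ι × κ) ℂ) (hρ : ρ.PosSemidef) :
    (trFst ρ).PosSemidef := by
  rw [Matrix.posSemidef_iff_dotProduct_mulVec]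
  constructor
  · ext j j'
    simp only [Matrix.conjTranspose_apply, trFst, Matrix.of_apply, star_sum]
    exact Finset.sum_congr rfl fun i _ => hρ.1.apply _ _
  · intro x
    have term : ∀ i : ι,
        dotProduct (star fun p : ι × κ => if p.1 = i then x p.2 else 0)
          (ρ *ᵥ fun p : ι × κ => if p.1 = i then x p.2 else 0)
        = ∑ j, ∑ j', star (x j) * (ρ (i, j) (i, j') * x j') := by
      intro i
      simp only [dotProduct, Matrix.mulVec, dotProduct, Pi.star_apply,
        Fintype.sum_prod_type]
      rw [Fintype.sum_eq_single i (fun a ha => by simp [ha])]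
      refine Finset.sum_congr rfl fun j _ => ?_
      simp only [if_pos rfl]
      congr 1
      rw [Fintype.sum_eq_single i (fun a ha => by simp [ha])]
      simp [Finset.mul_sum]
    have hsum : dotProduct (star x) (trFst ρ *ᵥ x)
        = ∑ i : ι, ∑ j, ∑ j', star (x j) * (ρ (i, j) (i, j') * x j') := by
      simp only [dotProduct, Matrix.mulVec, dotProduct, trFst, Matrix.of_apply,
        Pi.star_apply, Finset.sum_mul, Finset.mul_sum]
      have e1 : (∑ j, ∑ j', ∑ i : ι, star (x j) * (ρ (i, j) (i, j') * x j'))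
          = ∑ j, ∑ i : ι, ∑ j', star (x j) * (ρ (i, j) (i, j') * x j') :=
        Finset.sum_congr rfl fun j _ => Finset.sum_comm
      have e2 : (∑ j, ∑ i : ι, ∑ j', star (x j) * (ρ (i, j) (i, j') * x j'))
          = ∑ i : ι, ∑ j, ∑ j', star (x j) * (ρ (i, j) (i, j') * x j') := Finset.sum_comm
      rw [← e2, ← e1]
    rw [hsum]
    exact Finset.sum_nonneg fun i _ => by rw [← term i]; exact hρ.dotProduct_mulVec_nonneg _

end prodsec
end RelEntAux

theorem relEntropy_sup {ι κ : Type*} [Fintype ι] [DecidableEq ι] [Fintype κ] [DecidableEq κ]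
    (ρ : Matrix (ι × κ) (ι × κ) ℂ) (hρ : ρ.PosSemidef) (hρ1 : ρ.trace = 1) :
    sSup {x : ℝ | ∃ σ : Matrix κ κ ℂ, σ.PosSemidef ∧ σ.trace = 1 ∧
        LinearMap.ker σ.mulVecLin ≤ LinearMap.ker (trFst ρ).mulVecLin ∧
        x = -relEntropy ρ ((1 : Matrix ι ι ℂ) ⊗ₖ σ)} =
      -relEntropy ρ ((1 : Matrix ι ι ℂ) ⊗ₖ trFst ρ) := by
  classical
  have hρBpsd : (trFst ρ).PosSemidef := RelEntAux.trFst_posSemidef ρ hρ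
  have hρBtr : (trFst ρ).trace = 1 := by rw [RelEntAux.trFst_trace, hρ1]
  have hval : ∀ σ : Matrix κ κ ℂ, σ.IsHermitian →
      -relEntropy ρ ((1 : Matrix ι ι ℂ) ⊗ₖ σ)
        = -(ρ * matLog ρ).trace.re + (trFst ρ * matLog σ).trace.re := by
    intro σ hσ
    rw [relEntropy, RelEntAux.matLog_one_kron σ hσ, Matrix.mul_sub, Matrix.trace_sub,
      Complex.sub_re, RelEntAux.trace_mul_one_kron]
    ring
  have hle : ∀ x ∈ {x : ℝ | ∃ σ : Matrix κ κ ℂ, σ.PosSemidef ∧ σ.trace = 1 ∧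
      LinearMap.ker σ.mulVecLin ≤ LinearMap.ker (trFst ρ).mulVecLin ∧
      x = -relEntropy ρ ((1 : Matrix ι ι ℂ) ⊗ₖ σ)},
      x ≤ -relEntropy ρ ((1 : Matrix ι ι ℂ) ⊗ₖ trFst ρ) := by
    rintro x ⟨σ, h1, h2, h3, rfl⟩
    rw [hval σ h1.1, hval (trFst ρ) hρBpsd.1]
    have := RelEntAux.log_trace_le hρBpsd h1 hρBtr h2 h3
    linarith
  have hmem : -relEntropy ρ ((1 : Matrix ι ι ℂ) ⊗ₖ trFst ρ) ∈
      {x : ℝ | ∃ σ : Matrix κ κ ℂ, σ.PosSemidef ∧ σ.trace = 1 ∧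
        LinearMap.ker σ.mulVecLin ≤ LinearMap.ker (trFst ρ).mulVecLin ∧
        x = -relEntropy ρ ((1 : Matrix ι ι ℂ) ⊗ₖ σ)} :=
    ⟨trFst ρ, hρBpsd, hρBtr, le_refl _, rfl⟩
  exact le_antisymm (csSup_le ⟨_, hmem⟩ hle) (le_csSup ⟨_, hle⟩ hmem)
end
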